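/- Monotonicity of the optimal variance in the weight variance (Lemma 4(ii), monotonicity part): Fix a ≥ 0 and b > 0, and for each v > 0 let x_min(v) ∈ (0, ∞) denote the unique minimizer of f_v(x) = (a + b/x)((v+1)e^x − 1) on (0, ∞). Then v ↦ x_min(v) is strictly increasing on (0, ∞): for all 0 < v₁ < v₂, x_min(v₁) < x_min(v₂). -/

import Mathlib

open Set

/-- Derivative of `f_v`. -/
lemma fv_hasDerivAt (a b v x : ℝ) (hx : 0 < x) :
    HasDerivAt (fun x => (a + b / x) * ((v + 1) * Real.exp x - 1))
      ((b * -(x ^ 2)⁻¹) * ((v + 1) * Real.exp x - 1)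
        + (a + b / x) * ((v + 1) * Real.exp x)) x := by
  have h1 : HasDerivAt (fun x : ℝ => a + b / x) (b * -(x ^ 2)⁻¹) x := by
    have h := ((hasDerivAt_inv hx.ne').const_mul b).const_add a
    simpa [div_eq_mul_inv] using h
  have h2 : HasDerivAt (fun x : ℝ => (v + 1) * Real.exp x - 1) ((v + 1) * Real.exp x) x :=
    ((Real.hasDerivAt_exp x).const_mul (v + 1)).sub_const 1
  exact h1.mul h2

/-- **Monotonicity of the optimal variance in the weight variance** (Lemma 4(ii),
monotonicity part).  Fix `a ≥ 0` and `b > 0`, and for each `v > 0` let `xmin v ∈ (0, ∞)`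
be the (unique, by Lemma 4(i)) minimizer of `f_v(x) = (a + b/x)((v+1)e^x − 1)` on
`(0, ∞)`.  Then `v ↦ xmin v` is strictly increasing on `(0, ∞)`. -/
theorem optimal_variance_strict_mono
    (a b : ℝ) (ha : 0 ≤ a) (hb : 0 < b)
    (xmin : ℝ → ℝ)
    (hxmin : ∀ v, 0 < v → xmin v ∈ Ioi (0 : ℝ) ∧
      IsMinOn (fun x => (a + b / x) * ((v + 1) * Real.exp x - 1)) (Ioi (0 : ℝ)) (xmin v)) :
    ∀ v₁ v₂ : ℝ, 0 < v₁ → v₁ < v₂ → xmin v₁ < xmin v₂ := by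
  intro v₁ v₂ hv₁ h12
  obtain ⟨hx₁, hm₁⟩ := hxmin v₁ hv₁
  obtain ⟨hx₂, hm₂⟩ := hxmin v₂ (hv₁.trans h12)
  rw [mem_Ioi] at hx₁ hx₂
  by_contra hcon
  push_neg at hcon
  rcases lt_or_eq_of_le hcon with hlt | heq
  · -- case xmin v₂ < xmin v₁ : single-crossing contradiction
    have h1 : (a + b / xmin v₁) * ((v₁ + 1) * Real.exp (xmin v₁) - 1)
        ≤ (a + b / xmin v₂) * ((v₁ + 1) * Real.exp (xmin v₂) - 1) :=
      (isMinOn_iff.mp hm₁) _ (mem_Ioi.mpr hx₂)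
    have h2 : (a + b / xmin v₂) * ((v₂ + 1) * Real.exp (xmin v₂) - 1)
        ≤ (a + b / xmin v₁) * ((v₂ + 1) * Real.exp (xmin v₁) - 1) :=
      (isMinOn_iff.mp hm₂) _ (mem_Ioi.mpr hx₁)
    set s := b / xmin v₁ with hs_def
    set t := b / xmin v₂ with ht_def
    set ex := Real.exp (xmin v₂) with hex_def
    set ey := Real.exp (xmin v₁) with hey_def
    have hst : s < t := div_lt_div_of_pos_left hb hx₂ hlt
    have hs : 0 < s := div_pos hb hx₁
    have hee : ex < ey := Real.exp_lt_exp.mpr hlt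
    have hex1 : 1 < ex := by
      rw [hex_def]
      exact Real.one_lt_exp_iff.mpr hx₂
    have key1 : (a + s) * ey < (a + t) * ex := by nlinarith
    have key2 : (a + t) * ex ≤ (a + s) * ey := by nlinarith
    linarith
  · -- case xmin v₂ = xmin v₁ : both derivatives vanish, contradiction
    set x := xmin v₁ with hx_def
    have hloc₁ : IsLocalMin (fun x => (a + b / x) * ((v₁ + 1) * Real.exp x - 1)) x :=
      hm₁.isLocalMin (Ioi_mem_nhds hx₁)
    have hloc₂ : IsLocalMin (fun x => (a + b / x) * ((v₂ + 1) * Real.exp x - 1)) x := by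
      rw [← heq]
      exact hm₂.isLocalMin (Ioi_mem_nhds hx₂)
    have E₁ := hloc₁.hasDerivAt_eq_zero (fv_hasDerivAt a b v₁ x hx₁)
    have E₂ := hloc₂.hasDerivAt_eq_zero (fv_hasDerivAt a b v₂ x (heq ▸ hx₂))
    set e := Real.exp x with he_def
    set w := (x ^ 2)⁻¹ with hw_def
    set c := a + b / x with hc_def
    have he : 0 < e := Real.exp_pos x
    have hw : 0 < w := by positivity
    have h3 : (v₂ - v₁) * e * (c - b * w) = 0 := by linear_combination E₂ - E₁
    have h4 : c - b * w = 0 := by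
      rcases mul_eq_zero.mp h3 with h | h
      · exact absurd h (mul_ne_zero (by nlinarith) he.ne')
      · exact h
    have h5 : b * w = 0 := by linear_combination E₁ - (v₁ + 1) * e * h4
    have : (0:ℝ) < b * w := by positivity
    linarith
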